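/- Let m ≥ 1 and a ∈ ℝ. Let P and C be real symmetric m×m matrices such that every eigenvalue of P lies in [λpmin, λpmax] and every eigenvalue of C lies in [λcmin, λcmax] with 0 < λcmin. Let k < 0 satisfy −1 − a + λpmax < k·λcmax and k·λcmin < 1 − a + λpmin. Then every eigenvalue of a·I_m − P + k·C lies in the open interval (−1, 1); in particular a·I_m − P + k·C is Schur stable. -/

import Mathlib

open Matrix

/-- The multiset of complex eigenvalues (roots of the characteristic polynomial over ℂ,
with multiplicity) of a real square matrix. -/
noncomputable def cRoots {n : ℕ} (M : Matrix (Fin n) (Fin n) ℝ) : Multiset ℂ :=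
  (M.map (Complex.ofReal)).charpoly.roots

/-- A real square matrix is Schur stable if all of its complex eigenvalues have
modulus strictly less than 1. -/
def SchurStable {n : ℕ} (M : Matrix (Fin n) (Fin n) ℝ) : Prop :=
  ∀ μ ∈ cRoots M, ‖μ‖ < 1

section Aux
open Polynomial ComplexOrder

variable {m : ℕ}

private lemma aux_psd_upper {A : Matrix (Fin m) (Fin m) ℝ} (hA : A.IsHermitian) (hi : ℝ)
    (h : ∀ i, hA.eigenvalues i ≤ hi) :
    (hi • (1 : Matrix (Fin m) (Fin m) ℝ) - A).PosSemidef := by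
  set U : Matrix (Fin m) (Fin m) ℝ := (hA.eigenvectorUnitary : Matrix (Fin m) (Fin m) ℝ) with hU
  have hUU : U * star U = 1 := Matrix.mem_unitaryGroup_iff.mp (hA.eigenvectorUnitary).2
  have hd : Matrix.diagonal (fun _ : Fin m => hi) = hi • (1 : Matrix (Fin m) (Fin m) ℝ) := by
    ext i j
    by_cases hij : i = j <;> simp [Matrix.diagonal, Matrix.one_apply, hij]
  have key : hi • (1 : Matrix (Fin m) (Fin m) ℝ) - A =
      U * Matrix.diagonal (fun i => hi - hA.eigenvalues i) * star U := by
    have hdd : Matrix.diagonal (fun i => hi - hA.eigenvalues i)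
        = hi • (1 : Matrix (Fin m) (Fin m) ℝ)
          - Matrix.diagonal (RCLike.ofReal ∘ hA.eigenvalues) := by
      rw [← hd, ← Matrix.diagonal_sub, RCLike.ofReal_real_eq_id]
      simp
    rw [hdd, Matrix.mul_sub, Matrix.sub_mul, ← (by have hs := hA.spectral_theorem; rw [Unitary.conjStarAlgAut_apply] at hs; exact hs :
        A = U * Matrix.diagonal (RCLike.ofReal ∘ hA.eigenvalues) * star U),
      Matrix.mul_smul, Matrix.smul_mul, mul_one, hUU]
  rw [key]
  exact (Matrix.posSemidef_diagonal_iff.mpr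
    (fun i => sub_nonneg.mpr (h i))).mul_mul_conjTranspose_same U

private lemma aux_psd_lower {A : Matrix (Fin m) (Fin m) ℝ} (hA : A.IsHermitian) (lo : ℝ)
    (h : ∀ i, lo ≤ hA.eigenvalues i) :
    (A - lo • (1 : Matrix (Fin m) (Fin m) ℝ)).PosSemidef := by
  set U : Matrix (Fin m) (Fin m) ℝ := (hA.eigenvectorUnitary : Matrix (Fin m) (Fin m) ℝ) with hU
  have hUU : U * star U = 1 := Matrix.mem_unitaryGroup_iff.mp (hA.eigenvectorUnitary).2
  have hd : Matrix.diagonal (fun _ : Fin m => lo) = lo • (1 : Matrix (Fin m) (Fin m) ℝ) := by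
    ext i j
    by_cases hij : i = j <;> simp [Matrix.diagonal, Matrix.one_apply, hij]
  have key : A - lo • (1 : Matrix (Fin m) (Fin m) ℝ) =
      U * Matrix.diagonal (fun i => hA.eigenvalues i - lo) * star U := by
    have hdd : Matrix.diagonal (fun i => hA.eigenvalues i - lo)
        = Matrix.diagonal (RCLike.ofReal ∘ hA.eigenvalues)
          - lo • (1 : Matrix (Fin m) (Fin m) ℝ) := by
      rw [← hd, ← Matrix.diagonal_sub, RCLike.ofReal_real_eq_id]
      simp
    rw [hdd, Matrix.mul_sub, Matrix.sub_mul, ← (by have hs := hA.spectral_theorem; rw [Unitary.conjStarAlgAut_apply] at hs; exact hs :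
        A = U * Matrix.diagonal (RCLike.ofReal ∘ hA.eigenvalues) * star U),
      Matrix.mul_smul, Matrix.smul_mul, mul_one, hUU]
  rw [key]
  exact (Matrix.posSemidef_diagonal_iff.mpr
    (fun i => sub_nonneg.mpr (h i))).mul_mul_conjTranspose_same U

private lemma aux_psd_map {M : Matrix (Fin m) (Fin m) ℝ} (h : M.PosSemidef) :
    (M.map (Complex.ofReal)).PosSemidef := by
  obtain ⟨B, rfl⟩ := (by open scoped MatrixOrder in exact CStarAlgebra.nonneg_iff_eq_star_mul_self.mp h.nonneg :
    ∃ B, M = Bᴴ * B)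
  have hBB : (Bᴴ * B).map (Complex.ofReal)
      = (B.map Complex.ofReal)ᴴ * (B.map Complex.ofReal) := by
    ext i j
    simp [Matrix.mul_apply, Matrix.map_apply, Matrix.conjTranspose_apply, Complex.conj_ofReal]
  rw [hBB]
  exact Matrix.posSemidef_conjTranspose_mul_self _

private lemma aux_herm_map {M : Matrix (Fin m) (Fin m) ℝ} (h : M.IsHermitian) :
    (M.map Complex.ofReal).IsHermitian := by
  unfold Matrix.IsHermitian
  ext i j
  simp only [Matrix.conjTranspose_apply, Matrix.map_apply, Complex.star_def, Complex.conj_ofReal]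
  exact_mod_cast congrFun (congrFun h i) j

private lemma aux_map_lin (r : ℝ) (A : Matrix (Fin m) (Fin m) ℝ) :
    (r • (1 : Matrix (Fin m) (Fin m) ℝ) - A).map Complex.ofReal
      = (r : ℂ) • (1 : Matrix (Fin m) (Fin m) ℂ) - A.map Complex.ofReal := by
  ext i j
  by_cases hij : i = j <;> simp [Matrix.map_apply, Matrix.one_apply, hij]

private lemma aux_map_lin' (r : ℝ) (A : Matrix (Fin m) (Fin m) ℝ) :
    (A - r • (1 : Matrix (Fin m) (Fin m) ℝ)).map Complex.ofReal
      = A.map Complex.ofReal - (r : ℂ) • (1 : Matrix (Fin m) (Fin m) ℂ) := by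
  ext i j
  by_cases hij : i = j <;> simp [Matrix.map_apply, Matrix.one_apply, hij]

/-- Key bound: any complex eigenpair of the mapped matrix has a real eigenvalue in `(-1, 1)`. -/
private lemma aux_key (a : ℝ)
    (P C : Matrix (Fin m) (Fin m) ℝ)
    (hP : P.IsHermitian) (hC : C.IsHermitian)
    (lpmin lpmax lcmin lcmax : ℝ)
    (hPev : ∀ i, lpmin ≤ hP.eigenvalues i ∧ hP.eigenvalues i ≤ lpmax)
    (hCev : ∀ i, lcmin ≤ hC.eigenvalues i ∧ hC.eigenvalues i ≤ lcmax)
    (k : ℝ) (hk : k < 0)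
    (h1 : -1 - a + lpmax < k * lcmax) (h2 : k * lcmin < 1 - a + lpmin)
    {μ : ℂ} {v : Fin m → ℂ} (hv : v ≠ 0)
    (heq : ((a • (1 : Matrix (Fin m) (Fin m) ℝ) - P + k • C).map Complex.ofReal) *ᵥ v
      = μ • v) :
    μ.im = 0 ∧ -1 < μ.re ∧ μ.re < 1 := by
  set Pc := P.map Complex.ofReal with hPc
  set Cc := C.map Complex.ofReal with hCc
  set t := dotProduct (star v) v with htdef
  -- facts about t
  have ht : t = ((∑ i, Complex.normSq (v i) : ℝ) : ℂ) := by
    simp [htdef, dotProduct, Complex.star_def, Complex.conj_mul',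
      Complex.ofReal_sum, ← Complex.sq_norm]
  obtain ⟨i0, hi0⟩ := Function.ne_iff.mp hv
  have htre : 0 < t.re := by
    rw [ht]
    simp only [Complex.ofReal_re]
    exact Finset.sum_pos' (fun j _ => Complex.normSq_nonneg _)
      ⟨i0, Finset.mem_univ i0, Complex.normSq_pos.mpr hi0⟩
  have htim : t.im = 0 := by rw [ht]; simp
  -- the mapped matrix
  have hmap : (a • (1 : Matrix (Fin m) (Fin m) ℝ) - P + k • C).map Complex.ofReal
      = (a : ℂ) • (1 : Matrix (Fin m) (Fin m) ℂ) - Pc + (k : ℂ) • Cc := by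
    ext i j
    by_cases hij : i = j <;>
      simp [Matrix.map_apply, Matrix.one_apply, hij, hPc, hCc]
  -- hermitian of the real matrix
  have hMre : (a • (1 : Matrix (Fin m) (Fin m) ℝ) - P + k • C).IsHermitian := by
    have hPt : Pᵀ = P := by
      ext i j; simpa using congrFun (congrFun hP i) j
    have hCt : Cᵀ = C := by
      ext i j; simpa using congrFun (congrFun hC i) j
    simp [Matrix.IsHermitian, Matrix.conjTranspose_add, Matrix.conjTranspose_sub,
      Matrix.conjTranspose_smul, hPt, hCt]
  have hMc : ((a • (1 : Matrix (Fin m) (Fin m) ℝ) - P + k • C).map Complex.ofReal).IsHermitian :=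
    aux_herm_map hMre
  set qP := dotProduct (star v) (Pc *ᵥ v) with hqP
  set qC := dotProduct (star v) (Cc *ᵥ v) with hqC
  -- main identity
  have hWv : dotProduct (star v)
      (((a • (1 : Matrix (Fin m) (Fin m) ℝ) - P + k • C).map Complex.ofReal) *ᵥ v) = μ * t := by
    rw [heq, dotProduct_smul, smul_eq_mul]
  have hexp : dotProduct (star v)
      (((a • (1 : Matrix (Fin m) (Fin m) ℝ) - P + k • C).map Complex.ofReal) *ᵥ v)
      = (a : ℂ) * t - qP + (k : ℂ) * qC := by
    rw [hmap, Matrix.add_mulVec, Matrix.sub_mulVec, Matrix.smul_mulVec,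
      Matrix.smul_mulVec, Matrix.one_mulVec, dotProduct_add,
      dotProduct_sub, dotProduct_smul, dotProduct_smul,
      smul_eq_mul, smul_eq_mul]
  -- μ*t is real since the matrix is hermitian
  have hreal : star (μ * t) = μ * t := by
    conv_lhs => rw [← hWv]
    rw [Matrix.star_dotProduct, star_star, Matrix.star_mulVec, hMc.eq,
      ← dotProduct_mulVec, hWv]
  have him : μ.im = 0 := by
    have h0 : (starRingEnd ℂ) μ * t = μ * t := by
      have := hreal
      rw [star_mul'] at this
      rwa [show star t = t by
        rw [Complex.star_def, Complex.conj_eq_iff_im]; exact htim] at this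
    have htne : t ≠ 0 := fun h => by simp [h] at htre
    have : (starRingEnd ℂ) μ = μ := mul_right_cancel₀ htne h0
    rw [Complex.conj_eq_iff_im] at this
    exact this
  -- quadratic form bounds
  have hbound : ∀ (A : Matrix (Fin m) (Fin m) ℝ) (hA : A.IsHermitian) (lo hi : ℝ),
      (∀ i, lo ≤ hA.eigenvalues i ∧ hA.eigenvalues i ≤ hi) →
      lo * t.re ≤ (dotProduct (star v) ((A.map Complex.ofReal) *ᵥ v)).re ∧
      (dotProduct (star v) ((A.map Complex.ofReal) *ᵥ v)).re ≤ hi * t.re := by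
    intro A hA lo hi hev
    constructor
    · have hpsd := (aux_psd_map (aux_psd_lower hA lo (fun i => (hev i).1))).re_dotProduct_nonneg v
      rw [aux_map_lin'] at hpsd
      rw [Matrix.sub_mulVec, Matrix.smul_mulVec, Matrix.one_mulVec,
        dotProduct_sub, dotProduct_smul, smul_eq_mul] at hpsd
      simp only [RCLike.re_to_complex, Complex.sub_re, Complex.mul_re, Complex.ofReal_re,
        Complex.ofReal_im, htim, ← htdef] at hpsd
      linarith
    · have hpsd := (aux_psd_map (aux_psd_upper hA hi (fun i => (hev i).2))).re_dotProduct_nonneg v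
      rw [aux_map_lin] at hpsd
      rw [Matrix.sub_mulVec, Matrix.smul_mulVec, Matrix.one_mulVec,
        dotProduct_sub, dotProduct_smul, smul_eq_mul] at hpsd
      simp only [RCLike.re_to_complex, Complex.sub_re, Complex.mul_re, Complex.ofReal_re,
        Complex.ofReal_im, htim, ← htdef] at hpsd
      linarith
  obtain ⟨hPlb, hPub⟩ := hbound P hP lpmin lpmax hPev
  obtain ⟨hClb, hCub⟩ := hbound C hC lcmin lcmax hCev
  rw [← hPc, ← hqP] at hPlb hPub
  rw [← hCc, ← hqC] at hClb hCub
  -- real part identity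
  have hre : μ.re * t.re = a * t.re - qP.re + k * qC.re := by
    have := congrArg Complex.re (hWv.symm.trans hexp)
    simpa [Complex.mul_re, Complex.add_re, Complex.sub_re, Complex.ofReal_re,
      Complex.ofReal_im, htim, him] using this
  refine ⟨him, ?_, ?_⟩
  · have hkc : k * (lcmax * t.re) ≤ k * qC.re := by
      have := mul_le_mul_of_nonpos_left hCub hk.le
      linarith
    have hh1 : (-1 - a + lpmax) * t.re < (k * lcmax) * t.re :=
      mul_lt_mul_of_pos_right h1 htre
    nlinarith
  · have hkc : k * qC.re ≤ k * (lcmin * t.re) := by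
      have := mul_le_mul_of_nonpos_left hClb hk.le
      linarith
    have hh2 : (k * lcmin) * t.re < (1 - a + lpmin) * t.re :=
      mul_lt_mul_of_pos_right h2 htre
    nlinarith

end Aux

theorem stmt_13 (m : ℕ) (hm : 1 ≤ m) (a : ℝ)
    (P C : Matrix (Fin m) (Fin m) ℝ)
    (hP : P.IsHermitian) (hC : C.IsHermitian)
    (lpmin lpmax lcmin lcmax : ℝ) (hlc : 0 < lcmin)
    (hPev : ∀ i, lpmin ≤ hP.eigenvalues i ∧ hP.eigenvalues i ≤ lpmax)
    (hCev : ∀ i, lcmin ≤ hC.eigenvalues i ∧ hC.eigenvalues i ≤ lcmax)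
    (k : ℝ) (hk : k < 0)
    (h1 : -1 - a + lpmax < k * lcmax) (h2 : k * lcmin < 1 - a + lpmin) :
    (∀ (hM : (a • (1 : Matrix (Fin m) (Fin m) ℝ) - P + k • C).IsHermitian) (i : Fin m),
        -1 < hM.eigenvalues i ∧ hM.eigenvalues i < 1) ∧
    SchurStable (a • (1 : Matrix (Fin m) (Fin m) ℝ) - P + k • C) := by
  set M := a • (1 : Matrix (Fin m) (Fin m) ℝ) - P + k • C with hMdef
  constructor
  · intro hM i
    -- real eigenvector
    set v : Fin m → ℝ := ⇑(hM.eigenvectorBasis i) with hvdef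
    have hMv : M *ᵥ v = hM.eigenvalues i • v := hM.mulVec_eigenvectorBasis i
    have hvne : v ≠ 0 := by
      intro h
      have h1 : hM.eigenvectorBasis i = 0 := by
        apply PiLp.ext
        intro j
        exact congrFun h j
      have := hM.eigenvectorBasis.orthonormal.1 i
      rw [h1] at this
      simp at this
    -- complexify
    set vc : Fin m → ℂ := fun j => ((v j : ℝ) : ℂ) with hvcdef
    have hvcne : vc ≠ 0 := by
      obtain ⟨j, hj⟩ := Function.ne_iff.mp hvne
      exact Function.ne_iff.mpr ⟨j, by simpa [hvcdef] using hj⟩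
    have heqc : (M.map Complex.ofReal) *ᵥ vc = ((hM.eigenvalues i : ℝ) : ℂ) • vc := by
      ext j
      have := congrFun hMv j
      simp only [Matrix.mulVec, dotProduct, Pi.smul_apply, smul_eq_mul] at this ⊢
      push_cast
      simp only [Matrix.map_apply, hvcdef]
      push_cast
      exact_mod_cast congrArg (Complex.ofReal) this
    obtain ⟨him, hlt1, hlt2⟩ := aux_key a P C hP hC lpmin lpmax lcmin lcmax hPev hCev
      k hk h1 h2 hvcne heqc
    constructor
    · simpa using hlt1
    · simpa using hlt2
  · intro μ hmem
    have hne : (M.map Complex.ofReal).charpoly ≠ 0 :=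
      (Matrix.charpoly_monic _).ne_zero
    rw [cRoots, Polynomial.mem_roots hne] at hmem
    have hroot : (M.map Complex.ofReal).charpoly.eval μ = 0 := hmem
    -- eval of charpoly is a determinant
    have hdet : (M.map Complex.ofReal).charpoly.eval μ
        = ((Polynomial.evalRingHom μ).mapMatrix
            (Matrix.charmatrix (M.map Complex.ofReal))).det := by
      rw [Matrix.charpoly, ← RingHom.map_det]
      rfl
    have hmm : (Polynomial.evalRingHom μ).mapMatrix (Matrix.charmatrix (M.map Complex.ofReal))
        = μ • (1 : Matrix (Fin m) (Fin m) ℂ) - M.map Complex.ofReal := by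
      ext i j
      by_cases hij : i = j
      · subst hij
        simp [Matrix.charmatrix_apply_eq, Matrix.one_apply]
      · simp [Matrix.charmatrix_apply_ne _ _ _ hij, Matrix.one_apply, hij]
    have hdet0 : (μ • (1 : Matrix (Fin m) (Fin m) ℂ) - M.map Complex.ofReal).det = 0 := by
      rw [← hmm, ← hdet, hroot]
    obtain ⟨v, hvne, hveq⟩ := (Matrix.exists_mulVec_eq_zero_iff).mpr hdet0
    have heqc : (M.map Complex.ofReal) *ᵥ v = μ • v := by
      have : μ • v - (M.map Complex.ofReal) *ᵥ v = 0 := by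
        rw [← hveq, Matrix.sub_mulVec, Matrix.smul_mulVec, Matrix.one_mulVec]
      linear_combination (norm := module) -this
    obtain ⟨him, hlt1, hlt2⟩ := aux_key a P C hP hC lpmin lpmax lcmin lcmax hPev hCev
      k hk h1 h2 hvne heqc
    have hμ : μ = ((μ.re : ℝ) : ℂ) := Complex.ext rfl (by simp [him])
    rw [hμ, Complex.norm_real, Real.norm_eq_abs]
    exact abs_lt.mpr ⟨hlt1, hlt2⟩
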